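/- If T is a bounded linear operator on a Banach space with ‖M_n(T)‖ → 0 (where M_n(T) = (1/n)∑_{k=1}^n T^k), then I - T is invertible. -/
import Mathlib


open Filter Topology

/-- If `‖M_n(T)‖ → 0`, where `M_n(T) = (1/n) ∑_{k=1}^n T^k`, then `I - T` is invertible. -/
theorem isUnit_one_sub_of_norm_cesaro_tendsto_zero {𝕜 : Type*} [RCLike 𝕜]
    {X : Type*} [NormedAddCommGroup X] [NormedSpace 𝕜 X] [CompleteSpace X]
    (T : X →L[𝕜] X)
    (h : Tendsto (fun n : ℕ => ‖(n : 𝕜)⁻¹ • ∑ k ∈ Finset.Icc 1 n, T ^ k‖) atTop (𝓝 0)) :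
    IsUnit (1 - T) := by
  obtain ⟨n, hn1, hlt⟩ :=
    ((eventually_ge_atTop 1).and (h.eventually (gt_mem_nhds one_pos))).exists
  set M : X →L[𝕜] X := (n : 𝕜)⁻¹ • ∑ k ∈ Finset.Icc 1 n, T ^ k with hM
  set C : X →L[𝕜] X :=
    (n : 𝕜)⁻¹ • ∑ k ∈ Finset.Icc 1 n, ∑ j ∈ Finset.range k, T ^ j with hC
  have hn0 : (n : 𝕜) ≠ 0 := by
    exact_mod_cast Nat.cast_ne_zero.2 (by omega)
  have key1 : ∀ k, (1 - T) * (∑ j ∈ Finset.range k, T ^ j) = 1 - T ^ k := by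
    intro k
    have := mul_geom_sum T k
    calc (1 - T) * (∑ j ∈ Finset.range k, T ^ j)
        = -((T - 1) * ∑ j ∈ Finset.range k, T ^ j) := by noncomm_ring
      _ = -(T ^ k - 1) := by rw [this]
      _ = 1 - T ^ k := by noncomm_ring
  have key2 : ∀ k, (∑ j ∈ Finset.range k, T ^ j) * (1 - T) = 1 - T ^ k := by
    intro k
    have := geom_sum_mul T k
    calc (∑ j ∈ Finset.range k, T ^ j) * (1 - T)
        = -((∑ j ∈ Finset.range k, T ^ j) * (T - 1)) := by noncomm_ring
      _ = -(T ^ k - 1) := by rw [this]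
      _ = 1 - T ^ k := by noncomm_ring
  have hsum : ∑ k ∈ Finset.Icc 1 n, ((1 : X →L[𝕜] X) - T ^ k)
      = (n : ℕ) • (1 : X →L[𝕜] X) - ∑ k ∈ Finset.Icc 1 n, T ^ k := by
    rw [Finset.sum_sub_distrib, Finset.sum_const, Nat.card_Icc]
    simp
  have hone : (n : 𝕜)⁻¹ • ((n : ℕ) • (1 : X →L[𝕜] X)) = 1 := by
    rw [← Nat.cast_smul_eq_nsmul 𝕜, smul_smul, inv_mul_cancel₀ hn0, one_smul]
  have h1 : (1 - T) * C = 1 - M := by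
    rw [hC, mul_smul_comm, Finset.mul_sum]
    simp only [key1]
    rw [hsum, smul_sub, hone, hM]
  have h2 : C * (1 - T) = 1 - M := by
    rw [hC, smul_mul_assoc, Finset.sum_mul]
    simp only [key2]
    rw [hsum, smul_sub, hone, hM]
  have hMlt : ‖M‖ < 1 := hlt
  set u : (X →L[𝕜] X)ˣ := Units.oneSub M hMlt with hu
  have huval : (u : X →L[𝕜] X) = 1 - M := rfl
  have hcomm : Commute (1 - T) (u : X →L[𝕜] X) := by
    show (1 - T) * ↑u = ↑u * (1 - T)
    rw [huval, ← h2, ← mul_assoc, h1, ← h2]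
  have hcomm' := hcomm.units_inv_right
  refine ⟨⟨1 - T, C * ↑u⁻¹, ?_, ?_⟩, rfl⟩
  · rw [← mul_assoc, h1, ← huval]
    exact u.mul_inv
  · rw [mul_assoc, ← hcomm'.eq, ← mul_assoc, h2, ← huval]
    exact u.mul_inv
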